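/- Let E₁ be a real-orthogonal projection on a complex Hilbert space whose range H₁ is standard (H₁ ∩ iH₁ = {0} and H₁ + iH₁ dense), and let E₂ be a real-orthogonal projection whose range H₂ is contained in the symplectic complement H₁'. If E₁ + E₂ − E₁ ∨ E₂ = 0, then E₂ = 0. -/

import Mathlib

/-- The symplectic complement of a real-linear subspace of a complex Hilbert space. -/
def sympS {H : Type*} [NormedAddCommGroup H] [InnerProductSpace ℂ H] (S : Set H) : Set H :=
  {ξ | ∀ h ∈ S, (inner ℂ ξ h : ℂ).im = 0}

/-- If `E₁` is a real-orthogonal projection with standard range, `E₂` a real-orthogonal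
projection with range contained in the symplectic complement of `ran E₁`, and
`P = E₁ ∨ E₂` the projection onto the closed real span of the two ranges, then
`E₁ + E₂ - P = 0` forces `E₂ = 0`. -/
theorem stmt_15 {H : Type*} [NormedAddCommGroup H] [InnerProductSpace ℂ H] [CompleteSpace H]
    (E₁ E₂ P : H →L[ℝ] H)
    (h1 : ∀ x, E₁ (E₁ x) = E₁ x) (h2 : ∀ x, E₂ (E₂ x) = E₂ x)
    (hPP : ∀ x, P (P x) = P x)
    (sa1 : ∀ x y : H, (inner ℂ (E₁ x) y : ℂ).re = (inner ℂ x (E₁ y) : ℂ).re)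
    (sa2 : ∀ x y : H, (inner ℂ (E₂ x) y : ℂ).re = (inner ℂ x (E₂ y) : ℂ).re)
    (saP : ∀ x y : H, (inner ℂ (P x) y : ℂ).re = (inner ℂ x (P y) : ℂ).re)
    (hsep : ∀ x : H, x ∈ LinearMap.range (E₁ : H →ₗ[ℝ] H) → Complex.I • x ∈ LinearMap.range (E₁ : H →ₗ[ℝ] H) → x = 0)
    (hcyc : Dense {z : H | ∃ x ∈ LinearMap.range (E₁ : H →ₗ[ℝ] H), ∃ y ∈ LinearMap.range (E₁ : H →ₗ[ℝ] H),
      z = x + Complex.I • y})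
    (hE₂ : ∀ x : H, E₂ x ∈ sympS ((LinearMap.range (E₁ : H →ₗ[ℝ] H) : Submodule ℝ H) : Set H))
    (hrange : LinearMap.range (P : H →ₗ[ℝ] H) = (LinearMap.range (E₁ : H →ₗ[ℝ] H) ⊔ LinearMap.range (E₂ : H →ₗ[ℝ] H)).topologicalClosure)
    (hzero : E₁ + E₂ - P = 0) :
    E₂ = 0 := by
  have hP : ∀ x, P x = E₁ x + E₂ x := by
    intro x
    have h := ContinuousLinearMap.ext_iff.mp hzero x
    simp only [ContinuousLinearMap.sub_apply, ContinuousLinearMap.add_apply,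
      ContinuousLinearMap.zero_apply, sub_eq_zero] at h
    exact h.symm
  have hmix : ∀ x, E₁ (E₂ x) + E₂ (E₁ x) = 0 := by
    intro x
    have h := hPP x
    rw [hP x, hP (E₁ x + E₂ x), map_add, map_add, h1, h2] at h
    have h' : E₁ (E₂ x) + E₂ (E₁ x) =
        (E₁ x + E₁ (E₂ x) + (E₂ (E₁ x) + E₂ x)) - (E₁ x + E₂ x) := by abel
    rw [h] at h'
    simpa using h'
  have hE12 : ∀ x, E₁ (E₂ x) = 0 := by
    intro x
    have a := hmix x
    have b := hmix (E₁ x)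
    rw [h1] at b
    have c : E₁ (E₁ (E₂ x)) + E₁ (E₂ (E₁ x)) = 0 := by
      rw [← map_add, a, map_zero]
    rw [h1] at c
    -- from b : E₁ (E₂ (E₁ x)) + E₂ (E₁ x) = 0 and c : E₁ (E₂ x) + E₁ (E₂ (E₁ x)) = 0
    have hAB : E₁ (E₂ x) = E₂ (E₁ x) := by
      have := eq_neg_of_add_eq_zero_left c
      rw [this, eq_neg_of_add_eq_zero_left b, neg_neg]
    have h2A : (2 : ℝ) • E₁ (E₂ x) = 0 := by
      rw [two_smul]; nth_rewrite 2 [hAB]; exact a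
    have := smul_eq_zero.mp h2A
    rcases this with h | h
    · norm_num at h
    · exact h
  ext x
  simp only [ContinuousLinearMap.zero_apply]
  have horth : ∀ h ∈ LinearMap.range (E₁ : H →ₗ[ℝ] H), (inner ℂ (E₂ x) h : ℂ) = 0 := by
    rintro h ⟨y, rfl⟩
    have hre : (inner ℂ (E₂ x) (E₁ y) : ℂ).re = 0 := by
      rw [← sa1 (E₂ x) y, hE12 x, inner_zero_left]
      simp
    have him : (inner ℂ (E₂ x) (E₁ y) : ℂ).im = 0 :=
      hE₂ x (E₁ y) (by exact ⟨y, rfl⟩)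
    exact Complex.ext (by simpa using hre) (by simpa using him)
  have hzero' : ∀ z ∈ {z : H | ∃ x ∈ LinearMap.range (E₁ : H →ₗ[ℝ] H), ∃ y ∈ LinearMap.range (E₁ : H →ₗ[ℝ] H),
      z = x + Complex.I • y}, (inner ℂ (E₂ x) z : ℂ) = 0 := by
    rintro z ⟨a, ha, b, hb, rfl⟩
    rw [inner_add_right, inner_smul_right, horth a ha, horth b hb, mul_zero, add_zero]
  have hcont : Continuous fun z : H => (inner ℂ (E₂ x) z : ℂ) :=
    continuous_const.inner continuous_id
  have hall : (fun z : H => (inner ℂ (E₂ x) z : ℂ)) = fun _ => (0 : ℂ) :=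
    Continuous.ext_on hcyc hcont continuous_const hzero'
  have hx : (inner ℂ (E₂ x) (E₂ x) : ℂ) = 0 := congrFun hall (E₂ x)
  exact inner_self_eq_zero.mp hx
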